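/- For every dominant weight λ and every pair of disjoint subsets I, J with I ∪ J = {1, …, r}, there is a unique point v ∈ V satisfying ⟨v, α_i^∨⟩ = 0 for all i ∈ I and ⟨λ − v, x_j⟩ = 0 for all j ∈ J; moreover this point v lies in IP_λ and is an extreme point (vertex) of IP_λ. -/

import Mathlib

private lemma exists_invariant_form {V : Type*} [AddCommGroup V] [Module ℚ V] {r : ℕ}
    (b : Module.Basis (Fin r) ℚ V) (coroot : Fin r → Module.Dual ℚ V)
    (hdiag : ∀ i, coroot i (b i) = 2)
    (Φ : Set V) (hΦfin : Φ.Finite) (hΦroot : ∀ i, b i ∈ Φ)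
    (hΦrefl : ∀ β ∈ Φ, ∀ i, β - coroot i β • b i ∈ Φ) :
    ∃ B : V →ₗ[ℚ] Module.Dual ℚ V,
      (∀ x y, B x y = B y x) ∧ (∀ x, 0 ≤ B x x) ∧ (∀ x, B x x = 0 → x = 0) ∧
      (∀ k x, 2 * B x (b k) = coroot k x * B (b k) (b k)) := by
  classical
  set s : Fin r → Module.End ℚ V :=
    fun i => LinearMap.id - (coroot i).smulRight (b i) with hs
  have hsapp : ∀ i x, s i x = x - coroot i x • b i := by
    intro i x; simp [hs]
  have hsinv : ∀ i, s i * s i = 1 := by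
    intro i
    apply LinearMap.ext
    intro x
    rw [Module.End.mul_apply, hsapp, hsapp, Module.End.one_apply]
    rw [map_sub, map_smul, hdiag i, smul_eq_mul]
    module
  set M := Submonoid.closure (Set.range s) with hM
  have hsmem : ∀ i, s i ∈ M := fun i => Submonoid.subset_closure ⟨i, rfl⟩
  have hMΦ : ∀ w ∈ M, ∀ β ∈ Φ, w β ∈ Φ := by
    intro w hw
    induction hw using Submonoid.closure_induction with
    | mem w hw =>
      obtain ⟨i, rfl⟩ := hw
      intro β hβ
      rw [hsapp]
      exact hΦrefl β hβ i
    | one => intro β hβ; simpa using hβ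
    | mul w₁ w₂ h₁ h₂ ih₁ ih₂ =>
      intro β hβ
      rw [Module.End.mul_apply]
      exact ih₁ _ (ih₂ _ hβ)
  have hMfin : {w : Module.End ℚ V | w ∈ M}.Finite := by
    haveI : Finite ↥Φ := hΦfin
    have hinj : Function.Injective
        (fun (w : ↥{w : Module.End ℚ V | w ∈ M}) =>
          (fun β : Φ => (⟨w.1 β, hMΦ w.1 w.2 β β.2⟩ : Φ))) := by
      intro w₁ w₂ h
      ext1
      apply b.ext
      intro i
      have := congrFun h ⟨b i, hΦroot i⟩
      exact congrArg Subtype.val this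
    haveI : Finite ↥{w : Module.End ℚ V | w ∈ M} := Finite.of_injective _ hinj
    exact Set.toFinite {w : Module.End ℚ V | w ∈ M}
  set WS : Finset (Module.End ℚ V) := hMfin.toFinset with hWS
  have hmemWS : ∀ w, w ∈ WS ↔ w ∈ M := fun w => hMfin.mem_toFinset
  have h1WS : (1 : Module.End ℚ V) ∈ WS := (hmemWS 1).mpr (one_mem M)
  set Bl : V →ₗ[ℚ] Module.Dual ℚ V :=
    ∑ w ∈ WS, ∑ i, ((b.coord i).comp w).smulRight ((b.coord i).comp w) with hBl
  have hBapp : ∀ x y, Bl x y = ∑ w ∈ WS, ∑ i, b.coord i (w x) * b.coord i (w y) := by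
    intro x y
    rw [hBl]
    simp [LinearMap.sum_apply, LinearMap.smulRight_apply, smul_eq_mul]
  have hsym : ∀ x y, Bl x y = Bl y x := by
    intro x y
    rw [hBapp, hBapp]
    refine Finset.sum_congr rfl fun w _ => Finset.sum_congr rfl fun i _ => mul_comm _ _
  have hpos : ∀ x, 0 ≤ Bl x x := by
    intro x
    rw [hBapp]
    refine Finset.sum_nonneg fun w _ => Finset.sum_nonneg fun i _ => mul_self_nonneg _
  have hdefn : ∀ x, Bl x x = 0 → x = 0 := by
    intro x hxx
    rw [hBapp] at hxx
    have h1 : ∑ i, b.coord i ((1 : Module.End ℚ V) x) * b.coord i ((1 : Module.End ℚ V) x) = 0 := by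
      refine (Finset.sum_eq_zero_iff_of_nonneg ?_).mp hxx 1 h1WS
      exact fun w _ => Finset.sum_nonneg fun i _ => mul_self_nonneg _
    simp only [Module.End.one_apply] at h1
    have h2 : ∀ i : Fin r, b.coord i x = 0 := by
      intro i
      have := (Finset.sum_eq_zero_iff_of_nonneg
        (fun j _ => mul_self_nonneg (b.coord j x))).mp h1 i (Finset.mem_univ i)
      exact mul_self_eq_zero.mp this
    exact b.forall_coord_eq_zero_iff.mp h2
  have hinv : ∀ (k : Fin r) (x y : V), Bl (s k x) (s k y) = Bl x y := by
    intro k x y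
    rw [hBapp, hBapp]
    have hperm : Function.Involutive (fun w : Module.End ℚ V => w * s k) := by
      intro w
      simp only [mul_assoc, hsinv k, mul_one]
    refine Finset.sum_equiv hperm.toPerm ?_ ?_
    · intro w
      simp only [Function.Involutive.coe_toPerm]
      constructor
      · intro hw
        exact (hmemWS _).mpr (mul_mem ((hmemWS _).mp hw) (hsmem k))
      · intro hw
        have := mul_mem ((hmemWS _).mp hw) (hsmem k)
        rw [mul_assoc, hsinv k, mul_one] at this
        exact (hmemWS _).mpr this
    · intro w _
      refine Finset.sum_congr rfl fun i _ => ?_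
      simp [Function.Involutive.toPerm, Module.End.mul_apply]
  have hkey : ∀ (k : Fin r) (x : V), 2 * Bl x (b k) = coroot k x * Bl (b k) (b k) := by
    intro k x
    have h := hinv k x (b k)
    have hsb : s k (b k) = -(b k) := by
      rw [hsapp, hdiag k]
      module
    rw [hsapp, hsb] at h
    rw [map_sub, map_smul] at h
    simp only [LinearMap.sub_apply, LinearMap.smul_apply, map_neg, smul_eq_mul] at h
    have hbb : Bl (b k) (b k) = Bl (b k) (b k) := rfl
    -- h : -(Bl x (b k)) - coroot k x * -(Bl (b k) (b k)) = Bl x (b k)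
    linarith [h]
  exact ⟨Bl, hsym, hpos, hdefn, hkey⟩



/-- The intersection polytope `IP_lam`: the set of dominant weights `μ` such that
`lam - μ` is a nonnegative rational combination of the simple roots. -/
def IP {V : Type*} [AddCommGroup V] [Module ℚ V] {r : ℕ}
    (b : Fin r → V) (coroot : Fin r → Module.Dual ℚ V) (lam : V) : Set V :=
  {μ | (∀ i, 0 ≤ coroot i μ) ∧
    ∃ c : Fin r → ℚ, (∀ i, 0 ≤ c i) ∧ lam - μ = ∑ i, c i • b i}

/-- For every dominant weight `lam` and every pair of disjoint subsets
`I, J` with `I ∪ J = {1, …, r}`, there is a unique point `v` with `⟨v, α_i^∨⟩ = 0` for all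
`i ∈ I` and `⟨lam − v, x_j⟩ = 0` for all `j ∈ J`; moreover any such `v` lies in `IP_lam`
and is an extreme point (vertex) of `IP_lam`. -/
theorem stmt_2 {V : Type*} [AddCommGroup V] [Module ℚ V] {r : ℕ}
    (b : Module.Basis (Fin r) ℚ V) (coroot : Fin r → Module.Dual ℚ V)
    (hdiag : ∀ i, coroot i (b i) = 2)
    (hoff : ∀ i j : Fin r, i ≠ j → coroot j (b i) ≤ 0)
    (hint : ∀ i j : Fin r, ∃ n : ℤ, coroot j (b i) = (n : ℚ))
    (Φ : Set V) (hΦfin : Φ.Finite) (hΦroot : ∀ i, b i ∈ Φ)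
    (hΦrefl : ∀ β ∈ Φ, ∀ i, β - coroot i β • b i ∈ Φ)
    (x : Fin r → Module.Dual ℚ V)
    (hx : ∀ i j : Fin r, x j (b i) = if i = j then 1 else 0)
    (I J : Finset (Fin r)) (hdisj : Disjoint I J) (hcover : I ∪ J = Finset.univ)
    (lam : V) (hlam : ∀ i, 0 ≤ coroot i lam) :
    (∃! v : V, (∀ i ∈ I, coroot i v = 0) ∧ (∀ j ∈ J, x j (lam - v) = 0)) ∧
      ∀ v : V, (∀ i ∈ I, coroot i v = 0) → (∀ j ∈ J, x j (lam - v) = 0) →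
        v ∈ IP (⇑b) coroot lam ∧ v ∈ (IP (⇑b) coroot lam).extremePoints ℚ := by
  obtain ⟨B, hBsym, hBpos, hBdef, hBkey⟩ :=
    exists_invariant_form b coroot hdiag Φ hΦfin hΦroot hΦrefl
  classical
  -- coordinates of explicit sums
  have hreprsum : ∀ (u : Fin r → ℚ) (i : Fin r), b.repr (∑ k, u k • b k) i = u i := by
    intro u i
    simp [map_sum, map_smul, Module.Basis.repr_self, Finsupp.single_apply]
  have hxsum : ∀ (u : Fin r → ℚ) (j : Fin r), x j (∑ k, u k • b k) = u j := by
    intro u j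
    rw [map_sum]
    simp only [map_smul, hx, smul_eq_mul, mul_ite, mul_one, mul_zero]
    simp [Finset.sum_ite_eq']
  -- the key positivity lemma
  have key : ∀ u : Fin r → ℚ, (∀ i, 0 ≤ u i) →
      (∀ i, u i ≠ 0 → coroot i (∑ k, u k • b k) ≤ 0) → ∀ i, u i = 0 := by
    intro u hu hcr
    set μ := ∑ k, u k • b k with hμ
    have h1 : B μ μ = ∑ k, u k * B (b k) μ := by
      have hB1 : B μ = ∑ k, u k • B (b k) := by
        rw [hμ, map_sum]
        exact Finset.sum_congr rfl fun k _ => by rw [map_smul]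
      rw [hB1, LinearMap.sum_apply]
      exact Finset.sum_congr rfl fun k _ => by rw [LinearMap.smul_apply, smul_eq_mul]
    have h2 : B μ μ ≤ 0 := by
      rw [h1]
      refine Finset.sum_nonpos fun k _ => ?_
      rcases eq_or_ne (u k) 0 with h | h
      · simp [h]
      · have hc := hcr k h
        have hb := hBkey k μ
        have hbk : B (b k) μ ≤ 0 := by
          rw [hBsym (b k) μ]
          nlinarith [hBpos (b k)]
        exact mul_nonpos_of_nonneg_of_nonpos (hu k) hbk
    have hμ0 : μ = 0 := hBdef μ (le_antisymm h2 (hBpos μ))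
    intro i
    have h3 := hreprsum u i
    rw [← hμ, hμ0, map_zero] at h3
    simpa using h3.symm
  -- the M-matrix lemma
  have Ml : ∀ c : Fin r → ℚ, (∀ j ∈ J, c j = 0) →
      (∀ i ∈ I, 0 ≤ coroot i (∑ k, c k • b k)) → ∀ i, 0 ≤ c i := by
    intro c hJ0 hI0
    have hmax : ∀ k, max (c k) 0 = c k + max (-c k) 0 := by
      intro k
      rcases le_total (c k) 0 with h | h
      · rw [max_eq_right h, max_eq_left (by linarith)]; ring
      · rw [max_eq_left h, max_eq_right (by linarith)]; ring
    have hall : ∀ k, max (-c k) 0 = 0 := by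
      apply key _ (fun k => le_max_right _ _)
      intro i hui
      have hci : c i < 0 := by
        by_contra hge
        push_neg at hge
        apply hui
        rw [max_eq_right (by linarith)]
      have hiI : i ∈ I := by
        have hnJ : i ∉ J := fun hiJ => absurd (hJ0 i hiJ) (ne_of_lt hci)
        have hu := Finset.mem_univ i
        rw [← hcover, Finset.mem_union] at hu
        tauto
      have hsplit : (∑ k, max (c k) 0 • b k)
          = (∑ k, c k • b k) + ∑ k, max (-c k) 0 • b k := by
        rw [← Finset.sum_add_distrib]
        refine Finset.sum_congr rfl fun k _ => ?_
        rw [hmax k, add_smul]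
      have h1 : coroot i (∑ k, max (-c k) 0 • b k)
          = coroot i (∑ k, max (c k) 0 • b k) - coroot i (∑ k, c k • b k) := by
        rw [hsplit, map_add]; ring
      have h2 : coroot i (∑ k, max (c k) 0 • b k) ≤ 0 := by
        rw [map_sum]
        refine Finset.sum_nonpos fun k _ => ?_
        rw [map_smul, smul_eq_mul]
        rcases eq_or_ne k i with rfl | hk
        · rw [max_eq_right hci.le, zero_mul]
        · exact mul_nonpos_of_nonneg_of_nonpos (le_max_right _ _) (hoff k i hk)
      have h3 := hI0 i hiI
      rw [h1]; linarith
    intro i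
    have h4 := hall i
    by_contra h
    push_neg at h
    rw [max_eq_left (by linarith)] at h4
    linarith
  -- the linear system
  set T : (Fin r → ℚ) →ₗ[ℚ] (Fin r → ℚ) :=
    { toFun := fun c i => if i ∈ I then coroot i (∑ k, c k • b k) else c i
      map_add' := by
        intro c d
        funext i
        by_cases h : i ∈ I <;>
          simp [h, add_smul, Finset.sum_add_distrib]
      map_smul' := by
        intro a c
        funext i
        simp only [RingHom.id_apply, Pi.smul_apply, smul_eq_mul]
        by_cases h : i ∈ I
        · simp only [h, if_true]
          have hss : (∑ k, (a * c k) • b k) = a • ∑ k, c k • b k := by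
            rw [Finset.smul_sum]
            exact Finset.sum_congr rfl fun k _ => mul_smul a (c k) (b k)
          rw [hss, map_smul, smul_eq_mul]
        · simp [h] } with hT
  have hTapp : ∀ (c : Fin r → ℚ) (i : Fin r),
      T c i = if i ∈ I then coroot i (∑ k, c k • b k) else c i := fun c i => rfl
  have hT0 : ∀ c, T c = 0 → c = 0 := by
    intro c hc
    have hJ0 : ∀ j ∈ J, c j = 0 := by
      intro j hj
      have hni : j ∉ I := Finset.disjoint_right.mp hdisj hj
      have h := congrFun hc j
      rw [hTapp] at h
      simpa [hni] using h
    have hI0 : ∀ i ∈ I, coroot i (∑ k, c k • b k) = 0 := by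
      intro i hi
      have h := congrFun hc i
      rw [hTapp] at h
      simpa [hi] using h
    have hneg0 : ∀ i ∈ I, 0 ≤ coroot i (∑ k, (fun k => -c k) k • b k) := by
      intro i hi
      have hs : (∑ k, (-c k) • b k) = -(∑ k, c k • b k) := by
        rw [← Finset.sum_neg_distrib]
        exact Finset.sum_congr rfl fun k _ => by rw [neg_smul]
      simp only [hs, map_neg, hI0 i hi, neg_zero, le_refl]
    have hp := Ml c hJ0 (fun i hi => (hI0 i hi).ge)
    have hn := Ml (fun k => -c k) (fun j hj => by show -c j = 0; rw [hJ0 j hj, neg_zero]) hneg0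
    funext i
    have h1 := hp i
    have h2 : (0:ℚ) ≤ -c i := hn i
    simp only [Pi.zero_apply]
    linarith
  have hTinj : Function.Injective T := by
    intro c d h
    have := hT0 (c - d) (by rw [map_sub, h, sub_self])
    exact sub_eq_zero.mp this
  have hTsurj : Function.Surjective T := LinearMap.injective_iff_surjective.mp hTinj
  -- characterization of solutions
  set tgt : Fin r → ℚ := fun i => if i ∈ I then coroot i lam else 0 with htgt
  have hchar : ∀ v : V,
      ((∀ i ∈ I, coroot i v = 0) ∧ (∀ j ∈ J, x j (lam - v) = 0)) ↔
      T (fun k => b.repr (lam - v) k) = tgt := by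
    intro v
    have hrepr : ∑ k, b.repr (lam - v) k • b k = lam - v := b.sum_repr (lam - v)
    have hxv : ∀ j : Fin r, x j (lam - v) = b.repr (lam - v) j := by
      intro j
      conv_lhs => rw [← hrepr]
      exact hxsum _ j
    constructor
    · rintro ⟨h1, h2⟩
      funext i
      rw [hTapp, htgt]
      by_cases hi : i ∈ I
      · simp only [hi, if_true]
        rw [hrepr, map_sub, h1 i hi, sub_zero]
      · have hj : i ∈ J := by
          have hu := Finset.mem_univ i
          rw [← hcover, Finset.mem_union] at hu
          tauto
        simp only [hi, if_false]
        rw [← hxv i]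
        exact h2 i hj
    · intro hTv
      constructor
      · intro i hi
        have h := congrFun hTv i
        rw [hTapp, htgt] at h
        simp only [hi, if_true] at h
        rw [hrepr, map_sub] at h
        linarith
      · intro j hj
        have hni : j ∉ I := Finset.disjoint_right.mp hdisj hj
        have h := congrFun hTv j
        rw [hTapp, htgt] at h
        simp only [hni, if_false] at h
        rw [hxv j, h]
  -- uniqueness
  have huniq : ∀ v v' : V,
      ((∀ i ∈ I, coroot i v = 0) ∧ (∀ j ∈ J, x j (lam - v) = 0)) →
      ((∀ i ∈ I, coroot i v' = 0) ∧ (∀ j ∈ J, x j (lam - v') = 0)) → v = v' := by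
    intro v v' hv hv'
    have h1 := (hchar v).mp hv
    have h2 := (hchar v').mp hv'
    have h3 : (fun k => b.repr (lam - v) k) = (fun k => b.repr (lam - v') k) :=
      hTinj (h1.trans h2.symm)
    have h4 : lam - v = lam - v' := by
      rw [← b.sum_repr (lam - v), ← b.sum_repr (lam - v')]
      exact Finset.sum_congr rfl fun k _ => by rw [congrFun h3 k]
    exact (sub_right_inj.mp h4)
  -- existence
  obtain ⟨c₀, hc₀⟩ := hTsurj tgt
  have hex : ∃ v : V, (∀ i ∈ I, coroot i v = 0) ∧ (∀ j ∈ J, x j (lam - v) = 0) := by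
    refine ⟨lam - ∑ k, c₀ k • b k, (hchar _).mpr ?_⟩
    have hls : lam - (lam - ∑ k, c₀ k • b k) = ∑ k, c₀ k • b k := by abel
    have : (fun k => b.repr (lam - (lam - ∑ k, c₀ k • b k)) k) = c₀ := by
      funext k
      rw [hls]
      exact hreprsum c₀ k
    rw [this]
    exact hc₀
  -- membership in IP
  have hmem : ∀ v : V, (∀ i ∈ I, coroot i v = 0) → (∀ j ∈ J, x j (lam - v) = 0) →
      v ∈ IP (⇑b) coroot lam := by
    intro v h1 h2
    have hTv := (hchar v).mp ⟨h1, h2⟩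
    set c : Fin r → ℚ := fun k => b.repr (lam - v) k with hcdef
    have hrepr : ∑ k, c k • b k = lam - v := b.sum_repr (lam - v)
    have hcJ : ∀ j ∈ J, c j = 0 := by
      intro j hj
      have hni : j ∉ I := Finset.disjoint_right.mp hdisj hj
      have h := congrFun hTv j
      rw [hTapp, htgt] at h
      simpa [hni] using h
    have hcI : ∀ i ∈ I, coroot i (∑ k, c k • b k) = coroot i lam := by
      intro i hi
      have h := congrFun hTv i
      rw [hTapp, htgt] at h
      simpa [hi] using h
    have hcpos : ∀ k, 0 ≤ c k := Ml c hcJ (fun i hi => by rw [hcI i hi]; exact hlam i)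
    refine ⟨?_, c, hcpos, hrepr.symm⟩
    intro i
    by_cases hi : i ∈ I
    · rw [h1 i hi]
    · have hj : i ∈ J := by
        have hu := Finset.mem_univ i
        rw [← hcover, Finset.mem_union] at hu
        tauto
      have hnp : coroot i (∑ k, c k • b k) ≤ 0 := by
        rw [map_sum]
        refine Finset.sum_nonpos fun k _ => ?_
        rw [map_smul, smul_eq_mul]
        rcases eq_or_ne k i with rfl | hk
        · rw [hcJ k hj, zero_mul]
        · exact mul_nonpos_of_nonneg_of_nonpos (hcpos k) (hoff k i hk)
      have hsub : coroot i (lam - v) = coroot i lam - coroot i v := map_sub _ _ _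
      rw [hrepr] at hnp
      have := hlam i
      linarith
  -- extreme point
  have hext : ∀ v : V, (∀ i ∈ I, coroot i v = 0) → (∀ j ∈ J, x j (lam - v) = 0) →
      v ∈ (IP (⇑b) coroot lam).extremePoints ℚ := by
    intro v h1 h2
    rw [mem_extremePoints]
    refine ⟨hmem v h1 h2, ?_⟩
    intro v₁ hv₁ v₂ hv₂ hseg
    simp only [openSegment, Set.mem_setOf_eq] at hseg
    obtain ⟨a, a', ha, ha', hab, habv⟩ := hseg
    obtain ⟨hd1, c₁, hc₁pos, hc₁⟩ := hv₁
    obtain ⟨hd2, c₂, hc₂pos, hc₂⟩ := hv₂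
    have hI1 : ∀ i ∈ I, coroot i v₁ = 0 ∧ coroot i v₂ = 0 := by
      intro i hi
      have h0 := h1 i hi
      rw [← habv, map_add, map_smul, map_smul, smul_eq_mul, smul_eq_mul] at h0
      have n1 : 0 ≤ a * coroot i v₁ := mul_nonneg ha.le (hd1 i)
      have n2 : 0 ≤ a' * coroot i v₂ := mul_nonneg ha'.le (hd2 i)
      have e1 : a * coroot i v₁ = 0 := by linarith
      have e2 : a' * coroot i v₂ = 0 := by linarith
      exact ⟨(mul_eq_zero.mp e1).resolve_left (ne_of_gt ha),
        (mul_eq_zero.mp e2).resolve_left (ne_of_gt ha')⟩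
    have hdecomp : lam - v = a • (lam - v₁) + a' • (lam - v₂) := by
      rw [← habv, smul_sub, smul_sub]
      have hl : lam = a • lam + a' • lam := by rw [← add_smul, hab, one_smul]
      nth_rewrite 1 [hl]
      abel
    have hJ1 : ∀ j ∈ J, x j (lam - v₁) = 0 ∧ x j (lam - v₂) = 0 := by
      intro j hj
      have e1 : x j (lam - v₁) = c₁ j := by rw [hc₁, hxsum]
      have e2 : x j (lam - v₂) = c₂ j := by rw [hc₂, hxsum]
      have h0 := h2 j hj
      rw [hdecomp, map_add, map_smul, map_smul, smul_eq_mul, smul_eq_mul, e1, e2] at h0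
      have n1 : 0 ≤ a * c₁ j := mul_nonneg ha.le (hc₁pos j)
      have n2 : 0 ≤ a' * c₂ j := mul_nonneg ha'.le (hc₂pos j)
      have g1 : a * c₁ j = 0 := by linarith
      have g2 : a' * c₂ j = 0 := by linarith
      constructor
      · rw [e1]; exact (mul_eq_zero.mp g1).resolve_left (ne_of_gt ha)
      · rw [e2]; exact (mul_eq_zero.mp g2).resolve_left (ne_of_gt ha')
    constructor
    · exact huniq v₁ v ⟨fun i hi => (hI1 i hi).1, fun j hj => (hJ1 j hj).1⟩ ⟨h1, h2⟩
    · exact huniq v₂ v ⟨fun i hi => (hI1 i hi).2, fun j hj => (hJ1 j hj).2⟩ ⟨h1, h2⟩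
  obtain ⟨v₀, hv₀⟩ := hex
  exact ⟨⟨v₀, hv₀, fun v hv => huniq v v₀ hv hv₀⟩,
    fun v h1 h2 => ⟨hmem v h1 h2, hext v h1 h2⟩⟩
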